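/- Let A be an r×n integer matrix, E = {α ∈ ℕⁿ : Aα = 0} and Ē = {α ∈ ℙⁿ : Aα = 0}. If Ē is nonempty, then Ē contains n − rank(A) linearly independent vectors; consequently the ℚ-linear spans of E and of Ē both equal the full rational solution space {α ∈ ℚⁿ : Aα = 0}, so dim E = dim Ē = n − rank(A). -/

import Mathlib

/-- **Dimension fact of Section 6.**  Let `A` be an `r × n` integer matrix,
`E = {α ∈ ℕⁿ : Aα = 0}` and `Ē = {α ∈ ℙⁿ : Aα = 0}`.  If `Ē ≠ ∅`, then `Ē` contains
`n − rank A` linearly independent vectors; consequently the `ℚ`-linear spans of `E` and of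
`Ē` both equal the full rational solution space `{α ∈ ℚⁿ : Aα = 0}`, whose dimension is
`n − rank A`; hence `dim E = dim Ē = n − rank A`. -/
theorem span_of_positive_solutions
    (r n : ℕ) (A : Matrix (Fin r) (Fin n) ℤ)
    (h : ∃ α : Fin n → ℤ, (∀ i, 0 < α i) ∧ A.mulVec α = 0) :
    (∃ f : Fin (n - (A.map ((↑) : ℤ → ℚ)).rank) → (Fin n → ℚ),
      LinearIndependent ℚ f ∧
      ∀ j, ∃ β : Fin n → ℤ, (∀ i, 0 < β i) ∧ A.mulVec β = 0 ∧ f j = fun i => (β i : ℚ)) ∧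
    Submodule.span ℚ
        {v : Fin n → ℚ | ∃ β : Fin n → ℤ, (∀ i, 0 ≤ β i) ∧ A.mulVec β = 0 ∧
          v = fun i => (β i : ℚ)} =
      LinearMap.ker (A.map ((↑) : ℤ → ℚ)).mulVecLin ∧
    Submodule.span ℚ
        {v : Fin n → ℚ | ∃ β : Fin n → ℤ, (∀ i, 0 < β i) ∧ A.mulVec β = 0 ∧
          v = fun i => (β i : ℚ)} =
      LinearMap.ker (A.map ((↑) : ℤ → ℚ)).mulVecLin ∧
    Module.finrank ℚ (LinearMap.ker (A.map ((↑) : ℤ → ℚ)).mulVecLin) =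
      n - (A.map ((↑) : ℤ → ℚ)).rank := by
  obtain ⟨α, hαpos, hαsol⟩ := h
  set B := A.map ((↑) : ℤ → ℚ) with hB
  -- cast compatibility
  have cast_sol : ∀ β : Fin n → ℤ, A.mulVec β = 0 → B.mulVec (fun i => (β i : ℚ)) = 0 := by
    intro β hβ
    funext j
    have := (RingHom.map_mulVec (Int.castRingHom ℚ) A β j).symm
    simpa [hβ, Function.comp_def, hB] using this
  have sol_cast : ∀ β : Fin n → ℤ, B.mulVec (fun i => (β i : ℚ)) = 0 → A.mulVec β = 0 := by
    intro β hβ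
    funext j
    have h1 := RingHom.map_mulVec (Int.castRingHom ℚ) A β j
    have : ((A.mulVec β j : ℤ) : ℚ) = 0 := h1.trans (congrFun hβ j)
    exact_mod_cast this
  set Sp : Set (Fin n → ℚ) :=
    {v : Fin n → ℚ | ∃ β : Fin n → ℤ, (∀ i, 0 < β i) ∧ A.mulVec β = 0 ∧
      v = fun i => (β i : ℚ)} with hSp
  set S0 : Set (Fin n → ℚ) :=
    {v : Fin n → ℚ | ∃ β : Fin n → ℤ, (∀ i, 0 ≤ β i) ∧ A.mulVec β = 0 ∧
      v = fun i => (β i : ℚ)} with hS0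
  have hsub : Sp ⊆ S0 := by
    rintro v ⟨β, hβpos, hβsol, rfl⟩
    exact ⟨β, fun i => (hβpos i).le, hβsol, rfl⟩
  have hS0ker : S0 ⊆ (LinearMap.ker B.mulVecLin : Set (Fin n → ℚ)) := by
    rintro v ⟨β, _, hβsol, rfl⟩
    simpa [LinearMap.mem_ker, Matrix.mulVecLin_apply] using cast_sol β hβsol
  -- span Sp = ker
  have hspanSp : Submodule.span ℚ Sp = LinearMap.ker B.mulVecLin := by
    apply le_antisymm
    · exact Submodule.span_le.mpr (fun v hv => hS0ker (hsub hv))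
    · intro v hv
      have hvker : B.mulVec v = 0 := by
        simpa [LinearMap.mem_ker, Matrix.mulVecLin_apply] using hv
      -- clear denominators
      set m : ℤ := ∏ i, ((v i).den : ℤ) with hm
      have hmpos : 0 < m := Finset.prod_pos (fun i _ => by exact_mod_cast (v i).pos)
      set w : Fin n → ℤ := fun i => (m / ((v i).den : ℤ)) * (v i).num with hw
      have hwv : ∀ i, (w i : ℚ) = (m : ℚ) * v i := by
        intro i
        have hd : ((v i).den : ℤ) ∣ m := Finset.dvd_prod_of_mem _ (Finset.mem_univ i)
        have hden : ((v i).den : ℚ) ≠ 0 := by exact_mod_cast (v i).den_ne_zero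
        have hkey : (w i : ℤ) * ((v i).den : ℤ) = m * (v i).num := by
          simp only [hw]
          rw [mul_right_comm, Int.ediv_mul_cancel hd]
        have hcast : (w i : ℚ) * ((v i).den : ℚ) = (m : ℚ) * ((v i).num : ℚ) := by
          exact_mod_cast congrArg (fun x : ℤ => (x : ℚ)) hkey
        rw [← Rat.num_div_den (v i)]
        field_simp
        linear_combination hcast
      have hcastw : (fun i => (w i : ℚ)) = (m : ℚ) • v := by
        funext i; simp [hwv i]
      have hwsol : A.mulVec w = 0 := by
        apply sol_cast
        rw [hcastw, Matrix.mulVec_smul, hvker, smul_zero]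
      -- big shift
      set N : ℤ := 1 + ∑ i, |w i| with hN
      have hN1 : 1 ≤ N := by
        have : 0 ≤ ∑ i, |w i| := Finset.sum_nonneg (fun i _ => abs_nonneg _)
        omega
      have hwle : ∀ i, |w i| ≤ ∑ j, |w j| := fun i =>
        Finset.single_le_sum (f := fun j => |w j|) (fun j _ => abs_nonneg _)
          (Finset.mem_univ i)
      set β₁ : Fin n → ℤ := w + N • α with hβ₁
      set β₂ : Fin n → ℤ := N • α with hβ₂
      have hβ₂pos : ∀ i, 0 < β₂ i := by
        intro i
        have h1 : (0:ℤ) < N := by omega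
        simpa [hβ₂] using mul_pos h1 (hαpos i)
      have hβ₁pos : ∀ i, 0 < β₁ i := by
        intro i
        have h1 : N ≤ N * α i := le_mul_of_one_le_right (by omega) (hαpos i)
        have h2 := hwle i
        have h3 : -(w i) ≤ |w i| := neg_le_abs _
        have h4 : β₂ i = N * α i := rfl
        simp only [hβ₁, Pi.add_apply, Pi.smul_apply, smul_eq_mul]
        omega
      have hβ₁sol : A.mulVec β₁ = 0 := by
        rw [hβ₁, Matrix.mulVec_add, Matrix.mulVec_smul, hwsol, hαsol, smul_zero, add_zero]
      have hβ₂sol : A.mulVec β₂ = 0 := by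
        rw [hβ₂, Matrix.mulVec_smul, hαsol, smul_zero]
      have hmem1 : (fun i => ((β₁ i : ℤ) : ℚ)) ∈ Submodule.span ℚ Sp :=
        Submodule.subset_span ⟨β₁, hβ₁pos, hβ₁sol, rfl⟩
      have hmem2 : (fun i => ((β₂ i : ℤ) : ℚ)) ∈ Submodule.span ℚ Sp :=
        Submodule.subset_span ⟨β₂, hβ₂pos, hβ₂sol, rfl⟩
      have hmne : ((m : ℚ)) ≠ 0 := by exact_mod_cast hmpos.ne'
      have hvexp : v = ((m : ℚ))⁻¹ •
          ((fun i => ((β₁ i : ℤ) : ℚ)) - fun i => ((β₂ i : ℤ) : ℚ)) := by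
        funext i
        simp only [Pi.smul_apply, Pi.sub_apply, hβ₁, hβ₂, Pi.add_apply, Pi.smul_apply,
          smul_eq_mul]
        push_cast
        rw [hwv i]
        field_simp
        ring
      rw [hvexp]
      exact Submodule.smul_mem _ _ (Submodule.sub_mem _ hmem1 hmem2)
  have hspanS0 : Submodule.span ℚ S0 = LinearMap.ker B.mulVecLin := by
    apply le_antisymm
    · exact Submodule.span_le.mpr hS0ker
    · rw [← hspanSp]; exact Submodule.span_mono hsub
  -- finrank of kernel
  have hfr : Module.finrank ℚ (LinearMap.ker B.mulVecLin) = n - B.rank := by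
    have hrn := LinearMap.finrank_range_add_finrank_ker B.mulVecLin
    rw [Module.finrank_pi] at hrn
    have hrank : B.rank = Module.finrank ℚ (LinearMap.range B.mulVecLin) := rfl
    simp only [Fintype.card_fin] at hrn
    omega
  -- linearly independent family
  refine ⟨?_, hspanS0, hspanSp, hfr⟩
  obtain ⟨s, hsSp, hspan, hli⟩ := exists_linearIndependent ℚ Sp
  have hsfin : s.Finite := hli.setFinite
  haveI := hsfin.fintype
  have hcard : s.toFinset.card = n - B.rank := by
    rw [← finrank_span_set_eq_card hli, hspan, hspanSp, hfr]
  have hcard' : Fintype.card s = n - B.rank := by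
    rw [← Set.toFinset_card]; exact hcard
  let e : Fin (n - B.rank) ≃ s := (Fintype.equivFinOfCardEq hcard').symm
  refine ⟨fun j => (e j : Fin n → ℚ), hli.comp e (e.injective), ?_⟩
  intro j
  obtain ⟨β, hβpos, hβsol, hβeq⟩ := hsSp (e j).2
  exact ⟨β, hβpos, hβsol, hβeq⟩
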